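/- Let p : ℝ^d → (0,∞) be C¹, ψ : ℝ^d → ℝ be C², and G : ℝ^d → ℝ be continuous, and suppose −∑_{i=1}^d ∂/∂x_i ( p · ∂ψ/∂x_i ) = G · p everywhere on ℝ^d. If ∫_{ℝ^d} ψ² p dx < ∞, ∫_{ℝ^d} |∇ψ|² p dx < ∞, and ∫_{ℝ^d} |ψ| |G| p dx < ∞, then ∫_{ℝ^d} |∇ψ|² p dx ≤ ∫_{ℝ^d} |ψ| |G| p dx. -/

import Mathlib

open MeasureTheory

/-- Partial derivative `∂f/∂x_i` of a scalar function on Euclidean `ℝ^d`. -/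
noncomputable def pdE {d : ℕ} (i : Fin d) (f : EuclideanSpace ℝ (Fin d) → ℝ)
    (x : EuclideanSpace ℝ (Fin d)) : ℝ :=
  fderiv ℝ f x (EuclideanSpace.single i 1)

variable {d : ℕ}

lemma inner_gradient (f : EuclideanSpace ℝ (Fin d) → ℝ) (x v : EuclideanSpace ℝ (Fin d)) :
    (inner ℝ (gradient f x) v : ℝ) = fderiv ℝ f x v := by
  rw [gradient, InnerProductSpace.toDual_symm_apply]

lemma grad_coord (f : EuclideanSpace ℝ (Fin d) → ℝ) (x : EuclideanSpace ℝ (Fin d)) (i : Fin d) :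
    gradient f x i = pdE i f x := by
  rw [pdE, ← inner_gradient]
  rw [show (EuclideanSpace.single i (1:ℝ)) = EuclideanSpace.single i ((1:ℝ):ℝ) from rfl,
    EuclideanSpace.inner_single_right]
  simp

lemma norm_grad_sq (f : EuclideanSpace ℝ (Fin d) → ℝ) (x : EuclideanSpace ℝ (Fin d)) :
    ‖gradient f x‖ ^ 2 = fderiv ℝ f x (gradient f x) := by
  rw [← inner_gradient, real_inner_self_eq_norm_sq]

lemma clm_expand (L : EuclideanSpace ℝ (Fin d) →L[ℝ] ℝ) (y : EuclideanSpace ℝ (Fin d)) :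
    L y = ∑ i, y i * L (EuclideanSpace.single i 1) := by
  have hy : y = ∑ i, y i • EuclideanSpace.single i (1:ℝ) := by
    conv_lhs => rw [← (EuclideanSpace.basisFun (Fin d) ℝ).sum_repr y]
    simp [EuclideanSpace.basisFun_repr, EuclideanSpace.basisFun_apply]
  conv_lhs => rw [hy]
  rw [map_sum]
  simp [smul_eq_mul]

lemma integral_pdE_zero (f : EuclideanSpace ℝ (Fin d) → ℝ)
    (hf : ContDiff ℝ 1 f) (h'f : HasCompactSupport f) (i : Fin d) :
    ∫ x, pdE i f x = 0 := by
  obtain ⟨D, hD⟩ := ContDiff.lipschitzWith_of_hasCompactSupport h'f hf one_ne_zero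
  have h := LipschitzWith.integral_lineDeriv_mul_eq (μ := volume) (LipschitzWith.const (1:ℝ))
    hD h'f (-(EuclideanSpace.single i 1))
  have hl : ∀ x : EuclideanSpace ℝ (Fin d),
      lineDeriv ℝ (fun _ => (1:ℝ)) x (-(EuclideanSpace.single i 1)) = 0 := by
    intro x; simp [lineDeriv, lineDerivWithin]
  simp only [hl, zero_mul, integral_zero, neg_neg, mul_one] at h
  have hl2 : ∀ x : EuclideanSpace ℝ (Fin d),
      lineDeriv ℝ f x (EuclideanSpace.single i 1) = pdE i f x := fun x =>
    ((hf.differentiable one_ne_zero) x).lineDeriv_eq_fderiv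
  simp only [hl2] at h
  exact h.symm

lemma pdE_mul (a b : EuclideanSpace ℝ (Fin d) → ℝ) (x : EuclideanSpace ℝ (Fin d))
    (ha : DifferentiableAt ℝ a x) (hb : DifferentiableAt ℝ b x) (i : Fin d) :
    pdE i (fun y => a y * b y) x = pdE i a x * b x + a x * pdE i b x := by
  rw [pdE, fderiv_fun_mul ha hb]
  simp [pdE]
  ring

set_option maxHeartbeats 1000000 in
/-- the a priori estimate (62) in the proof of Lemma 3 of the paper.
Let `p : ℝ^d → (0,∞)` be C¹, `ψ` C², `G` continuous with `−∑_i ∂_i(p ∂_i ψ) = G p`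
everywhere.  If `∫ ψ² p`, `∫ |∇ψ|² p` and `∫ |ψ||G| p` are finite, then
`∫ |∇ψ|² p ≤ ∫ |ψ||G| p`. -/
theorem stmt13 {d : ℕ}
    (p : EuclideanSpace ℝ (Fin d) → ℝ) (hp : ContDiff ℝ 1 p) (hppos : ∀ x, 0 < p x)
    (ψ : EuclideanSpace ℝ (Fin d) → ℝ) (hψ : ContDiff ℝ 2 ψ)
    (G : EuclideanSpace ℝ (Fin d) → ℝ) (hG : Continuous G)
    (heq : ∀ x, -∑ i, pdE i (fun y => p y * pdE i ψ y) x = G x * p x)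
    (h1 : Integrable (fun x => (ψ x) ^ 2 * p x))
    (h2 : Integrable (fun x => ‖gradient ψ x‖ ^ 2 * p x))
    (h3 : Integrable (fun x => |ψ x| * |G x| * p x)) :
    ∫ x, ‖gradient ψ x‖ ^ 2 * p x ≤ ∫ x, |ψ x| * |G x| * p x := by
  classical
  -- basic regularity facts
  have hψ1 : ContDiff ℝ 1 ψ := hψ.of_le one_le_two
  have hψd : Differentiable ℝ ψ := hψ1.differentiable one_ne_zero
  have hpdψ : ∀ i : Fin d, ContDiff ℝ 1 (fun y => pdE i ψ y) := by
    intro i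
    simp only [pdE]
    exact (hψ.fderiv_right (m := 1) (by norm_num)).clm_apply contDiff_const
  have hgradeq : (fun x : EuclideanSpace ℝ (Fin d) => gradient ψ x)
      = fun x => (InnerProductSpace.toDual ℝ (EuclideanSpace ℝ (Fin d))).symm (fderiv ℝ ψ x) := rfl
  have hgradc : Continuous fun x : EuclideanSpace ℝ (Fin d) => gradient ψ x := by
    rw [hgradeq]
    exact (InnerProductSpace.toDual ℝ (EuclideanSpace ℝ (Fin d))).symm.continuous.comp (hψ.continuous_fderiv two_ne_zero)
  -- the bump function and its scalings
  let β : ContDiffBump (0 : EuclideanSpace ℝ (Fin d)) := ⟨1, 2, one_pos, one_lt_two⟩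
  have hβ1 : ContDiff ℝ 1 β := β.contDiff
  have hβcs : HasCompactSupport (β : EuclideanSpace ℝ (Fin d) → ℝ) := β.hasCompactSupport
  obtain ⟨C, hC⟩ := (hβcs.fderiv ℝ).exists_bound_of_continuous (hβ1.continuous_fderiv one_ne_zero)
  have hC0 : 0 ≤ C := le_trans (norm_nonneg _) (hC 0)
  set χ : ℕ → EuclideanSpace ℝ (Fin d) → ℝ := fun n x => β ((n : ℝ)⁻¹ • x) with hχdef
  have hχsm : ∀ n : ℕ, ContDiff ℝ 1 (χ n) := by
    intro n
    exact hβ1.comp (contDiff_const_smul _)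
  have hχ0 : ∀ n x, 0 ≤ χ n x := fun n x => β.nonneg
  have hχ1 : ∀ n x, χ n x ≤ 1 := fun n x => β.le_one
  have hχcs : ∀ n : ℕ, 1 ≤ n → HasCompactSupport (χ n) := by
    intro n hn
    apply HasCompactSupport.intro (isCompact_closedBall (0 : EuclideanSpace ℝ (Fin d)) (2 * n))
    intro x hx
    have hxn : (2 : ℝ) * n < ‖x‖ := by
      simpa [Metric.mem_closedBall, dist_zero_right] using hx
    have hn0 : (0 : ℝ) < n := by exact_mod_cast hn
    have : (n : ℝ)⁻¹ • x ∉ Function.support (β : EuclideanSpace ℝ (Fin d) → ℝ) := by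
      rw [β.support_eq]
      simp only [Metric.mem_ball, dist_zero_right, not_lt, norm_smul, norm_inv,
        Real.norm_natCast]
      show β.rOut ≤ (n : ℝ)⁻¹ * ‖x‖
      have : β.rOut = 2 := rfl
      rw [this]
      rw [le_inv_mul_iff₀ hn0]
      linarith
    simpa using Function.notMem_support.mp this
  have hχone : ∀ x : EuclideanSpace ℝ (Fin d), ∀ᶠ n : ℕ in Filter.atTop, χ n x = 1 := by
    intro x
    rw [Filter.eventually_atTop]
    refine ⟨⌈‖x‖⌉₊ + 1, fun n hn => ?_⟩
    have hn0 : (0 : ℝ) < n := by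
      have : 1 ≤ n := le_trans (Nat.le_add_left 1 _) hn
      exact_mod_cast this
    apply β.one_of_mem_closedBall
    have hxn : ‖x‖ ≤ (n : ℝ) := by
      calc ‖x‖ ≤ (⌈‖x‖⌉₊ : ℝ) := Nat.le_ceil _
        _ ≤ (n : ℝ) := by exact_mod_cast le_trans (Nat.le_succ _) hn
    simp only [Metric.mem_closedBall, dist_zero_right, norm_smul, norm_inv, Real.norm_natCast]
    show (n : ℝ)⁻¹ * ‖x‖ ≤ β.rIn
    have : β.rIn = 1 := rfl
    rw [this, inv_mul_le_iff₀ hn0]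
    linarith
  -- derivative bound for χ n
  have hχd : ∀ n : ℕ, 1 ≤ n → ∀ (x w : EuclideanSpace ℝ (Fin d)), |fderiv ℝ (χ n) x w| ≤ C / n * ‖w‖ := by
    intro n hn x w
    have hβd : Differentiable ℝ (β : EuclideanSpace ℝ (Fin d) → ℝ) := hβ1.differentiable one_ne_zero
    set L : EuclideanSpace ℝ (Fin d) →L[ℝ] EuclideanSpace ℝ (Fin d) :=
      (n : ℝ)⁻¹ • ContinuousLinearMap.id ℝ (EuclideanSpace ℝ (Fin d)) with hL
    have hLx : ∀ y, L y = (n:ℝ)⁻¹ • y := fun y => rfl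
    have hcomp : HasFDerivAt (χ n) ((fderiv ℝ β ((n:ℝ)⁻¹ • x)).comp L) x := by
      have hd1 : HasFDerivAt β (fderiv ℝ β ((n:ℝ)⁻¹ • x)) ((n:ℝ)⁻¹ • x) := (hβd _).hasFDerivAt
      have hd2 : HasFDerivAt (fun y : EuclideanSpace ℝ (Fin d) => (n:ℝ)⁻¹ • y) L x :=
        L.hasFDerivAt
      exact hd1.comp x hd2
    rw [hcomp.fderiv]
    have happ : ((fderiv ℝ β ((n:ℝ)⁻¹ • x)).comp L) w
        = fderiv ℝ β ((n:ℝ)⁻¹ • x) ((n:ℝ)⁻¹ • w) := rfl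
    rw [happ]
    calc |fderiv ℝ β ((n:ℝ)⁻¹ • x) ((n:ℝ)⁻¹ • w)|
        ≤ ‖fderiv ℝ β ((n:ℝ)⁻¹ • x)‖ * ‖(n:ℝ)⁻¹ • w‖ := (fderiv ℝ β _).le_opNorm _
      _ ≤ C * ((n:ℝ)⁻¹ * ‖w‖) := by
          rw [norm_smul]
          simp only [norm_inv, Real.norm_natCast]
          gcongr
          exact hC _
      _ = C / n * ‖w‖ := by rw [div_eq_mul_inv]; ring
  -- the key inequality for each n
  have key : ∀ n : ℕ, 1 ≤ n →
      ∫ x, (χ n x) ^ 2 * ‖gradient ψ x‖ ^ 2 * p x ≤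
        (∫ x, |ψ x| * |G x| * p x)
          + C / n * ((∫ x, (ψ x) ^ 2 * p x) + ∫ x, ‖gradient ψ x‖ ^ 2 * p x) := by
    intro n hn
    have hχn1 : ContDiff ℝ 1 (χ n) := hχsm n
    have hχncs : HasCompactSupport (χ n) := hχcs n hn
    set c : EuclideanSpace ℝ (Fin d) → ℝ := χ n with hc
    set u : EuclideanSpace ℝ (Fin d) → ℝ := fun y => c y * c y * ψ y with hu
    have hu1 : ContDiff ℝ 1 u := (hχn1.mul hχn1).mul hψ1
    have hw1 : ∀ i, ContDiff ℝ 1 (fun y => p y * pdE i ψ y) := fun i => hp.mul (hpdψ i)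
    set V : Fin d → EuclideanSpace ℝ (Fin d) → ℝ := fun i y => u y * (p y * pdE i ψ y) with hV
    have hV1 : ∀ i, ContDiff ℝ 1 (V i) := fun i => hu1.mul (hw1 i)
    have hVcs : ∀ i, HasCompactSupport (V i) := by
      intro i
      have hre : V i = fun y => c y * (c y * ψ y * (p y * pdE i ψ y)) := by
        funext y; simp only [hV, hu]; ring
      rw [hre]
      exact hχncs.mul_right
    -- pointwise divergence identity
    have hId : ∀ x, (∑ i, pdE i (V i) x)
        = c x * c x * ‖gradient ψ x‖ ^ 2 * p x
          + 2 * (c x * ψ x * (fderiv ℝ c x (gradient ψ x))) * p x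
          - c x * c x * ψ x * (G x * p x) := by
      intro x
      have dc : DifferentiableAt ℝ c x := (hχn1.differentiable one_ne_zero) x
      have dψx : DifferentiableAt ℝ ψ x := hψd x
      have du : DifferentiableAt ℝ u x := (hu1.differentiable one_ne_zero) x
      have dw : ∀ i, DifferentiableAt ℝ (fun y => p y * pdE i ψ y) x := fun i =>
        ((hw1 i).differentiable one_ne_zero) x
      have step1 : ∀ i, pdE i (V i) x
          = pdE i u x * (p x * pdE i ψ x) + u x * pdE i (fun y => p y * pdE i ψ y) x := fun i =>
        pdE_mul u (fun y => p y * pdE i ψ y) x du (dw i) i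
      rw [Finset.sum_congr rfl fun i _ => step1 i, Finset.sum_add_distrib, ← Finset.mul_sum]
      have hsum2 : ∑ i, pdE i (fun y => p y * pdE i ψ y) x = -(G x * p x) := by
        have := heq x; linarith
      rw [hsum2]
      have hsum1 : ∑ i, pdE i u x * (p x * pdE i ψ x)
          = p x * fderiv ℝ u x (gradient ψ x) := by
        rw [clm_expand (fderiv ℝ u x) (gradient ψ x), Finset.mul_sum]
        refine Finset.sum_congr rfl fun i _ => ?_
        rw [grad_coord]
        show pdE i u x * (p x * pdE i ψ x) = p x * (pdE i ψ x * pdE i u x)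
        ring
      rw [hsum1]
      have e2 : fderiv ℝ (fun y => c y * c y) x (gradient ψ x)
          = 2 * (c x * fderiv ℝ c x (gradient ψ x)) := by
        rw [fderiv_fun_mul dc dc]
        simp only [ContinuousLinearMap.add_apply, ContinuousLinearMap.coe_smul',
          Pi.smul_apply, smul_eq_mul]
        ring
      have hfu : fderiv ℝ u x (gradient ψ x)
          = c x * c x * ‖gradient ψ x‖ ^ 2
            + 2 * (c x * ψ x * (fderiv ℝ c x (gradient ψ x))) := by
        rw [hu]
        rw [fderiv_fun_mul (show DifferentiableAt ℝ (fun y => c y * c y) x from dc.mul dc) dψx]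
        simp only [ContinuousLinearMap.add_apply, ContinuousLinearMap.coe_smul',
          Pi.smul_apply, smul_eq_mul]
        rw [e2, ← norm_grad_sq]
        ring
      rw [hfu]
      ring
    -- integrability of the divergence terms
    have hpdVint : ∀ i, Integrable (fun x => pdE i (V i) x) := by
      intro i
      have hcont : Continuous fun x => pdE i (V i) x := by
        simp only [pdE]
        exact (((hV1 i).continuous_fderiv one_ne_zero).clm_apply continuous_const)
      have hcs : HasCompactSupport fun x => pdE i (V i) x := by
        have h' := ((hVcs i).fderiv (𝕜 := ℝ)).comp_left
          (g := fun L : EuclideanSpace ℝ (Fin d) →L[ℝ] ℝ => L (EuclideanSpace.single i 1)) rfl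
        simpa [Function.comp_def, pdE] using h'
      exact hcont.integrable_of_hasCompactSupport hcs
    have hintdiv : ∫ x, ∑ i, pdE i (V i) x = 0 := by
      rw [integral_finset_sum Finset.univ (fun i _ => hpdVint i)]
      exact Finset.sum_eq_zero fun i _ => integral_pdE_zero (V i) (hV1 i) (hVcs i) i
    -- the three pieces
    set A := fun x => c x * c x * ‖gradient ψ x‖ ^ 2 * p x with hA
    set B := fun x => 2 * (c x * ψ x * (fderiv ℝ c x (gradient ψ x))) * p x with hB
    set Cc := fun x => c x * c x * ψ x * (G x * p x) with hCc
    have hfc_cont : Continuous fun x => fderiv ℝ c x (gradient ψ x) :=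
      (hχn1.continuous_fderiv one_ne_zero).clm_apply hgradc
    have hAcont : Continuous A := ((hχn1.continuous.mul hχn1.continuous).mul
      (hgradc.norm.pow 2)).mul hp.continuous
    have hBcont : Continuous B := (continuous_const.mul ((hχn1.continuous.mul
      hψ1.continuous).mul hfc_cont)).mul hp.continuous
    have hCccont : Continuous Cc := ((hχn1.continuous.mul hχn1.continuous).mul
      hψ1.continuous).mul (hG.mul hp.continuous)
    have hAcs : HasCompactSupport A := by
      have hre : A = fun x => c x * (c x * ‖gradient ψ x‖ ^ 2 * p x) := by
        funext x; simp only [hA]; ring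
      rw [hre]; exact hχncs.mul_right
    have hBcs : HasCompactSupport B := by
      have hre : B = fun x => c x * (2 * ψ x * (fderiv ℝ c x (gradient ψ x)) * p x) := by
        funext x; simp only [hB]; ring
      rw [hre]; exact hχncs.mul_right
    have hCccs : HasCompactSupport Cc := by
      have hre : Cc = fun x => c x * (c x * ψ x * (G x * p x)) := by
        funext x; simp only [hCc]; ring
      rw [hre]; exact hχncs.mul_right
    have hAint : Integrable A := hAcont.integrable_of_hasCompactSupport hAcs
    have hBint : Integrable B := hBcont.integrable_of_hasCompactSupport hBcs
    have hCcint : Integrable Cc := hCccont.integrable_of_hasCompactSupport hCccs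
    have e0 : ∫ x, (A x + B x - Cc x) = 0 := by
      have ef : (fun x => A x + B x - Cc x) = fun x => ∑ i, pdE i (V i) x := by
        funext x
        simp only [hA, hB, hCc]
        rw [hId x]
      rw [ef]; exact hintdiv
    have hABi : Integrable (fun x => A x + B x) := hAint.add hBint
    have e1 : ∫ x, (A x + B x - Cc x) = (∫ x, A x) + (∫ x, B x) - ∫ x, Cc x := by
      rw [integral_sub hABi hCcint, integral_add hAint hBint]
    have eA : ∫ x, A x = (∫ x, Cc x) - ∫ x, B x := by rw [e1] at e0; linarith
    -- bound ∫ Cc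
    have hCle : ∫ x, Cc x ≤ ∫ x, |ψ x| * |G x| * p x := by
      refine integral_mono hCcint h3 fun x => ?_
      have hps := (hppos x).le
      have habs : ψ x * G x ≤ |ψ x| * |G x| :=
        le_trans (le_abs_self _) (le_of_eq (abs_mul _ _))
      have hc2 : c x * c x ≤ 1 := by nlinarith [hχ0 n x, hχ1 n x]
      have hc2' : (0:ℝ) ≤ c x * c x := mul_nonneg (hχ0 n x) (hχ0 n x)
      have hgp : (0:ℝ) ≤ |ψ x| * |G x| := mul_nonneg (abs_nonneg _) (abs_nonneg _)
      have k1 : (c x * c x) * (ψ x * G x) ≤ (c x * c x) * (|ψ x| * |G x|) :=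
        mul_le_mul_of_nonneg_left habs hc2'
      have k2 : (c x * c x) * (|ψ x| * |G x|) ≤ 1 * (|ψ x| * |G x|) :=
        mul_le_mul_of_nonneg_right hc2 hgp
      calc Cc x = (c x * c x) * (ψ x * G x) * p x := by simp only [hCc]; ring
        _ ≤ 1 * (|ψ x| * |G x|) * p x :=
            mul_le_mul_of_nonneg_right (le_trans k1 k2) hps
        _ = |ψ x| * |G x| * p x := by ring
    -- bound -∫ B
    have hRint : Integrable (fun x => C / n * ((ψ x) ^ 2 * p x + ‖gradient ψ x‖ ^ 2 * p x)) :=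
      (h1.add h2).const_mul _
    have hCn : (0:ℝ) ≤ C / n := div_nonneg hC0 (Nat.cast_nonneg n)
    have hptB : ∀ x, -B x ≤ C / n * ((ψ x) ^ 2 * p x + ‖gradient ψ x‖ ^ 2 * p x) := by
      intro x
      have hps := (hppos x).le
      have h1' : |fderiv ℝ c x (gradient ψ x)| ≤ C / n * ‖gradient ψ x‖ := hχd n hn x _
      have hcx : |c x| ≤ 1 := by rw [abs_of_nonneg (hχ0 n x)]; exact hχ1 n x
      have m1 : |c x| * |ψ x| * |fderiv ℝ c x (gradient ψ x)|
          ≤ 1 * |ψ x| * |fderiv ℝ c x (gradient ψ x)| :=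
        mul_le_mul_of_nonneg_right
          (mul_le_mul_of_nonneg_right hcx (abs_nonneg _)) (abs_nonneg _)
      have m2 : 1 * |ψ x| * |fderiv ℝ c x (gradient ψ x)|
          ≤ 1 * |ψ x| * (C / n * ‖gradient ψ x‖) := by
        apply mul_le_mul_of_nonneg_left h1'
        positivity
      have step : -(c x * ψ x * fderiv ℝ c x (gradient ψ x))
          ≤ |ψ x| * (C / n * ‖gradient ψ x‖) := by
        have habs : -(c x * ψ x * fderiv ℝ c x (gradient ψ x))
            ≤ |c x * ψ x * fderiv ℝ c x (gradient ψ x)| := neg_le_abs _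
        have heqa : |c x * ψ x * fderiv ℝ c x (gradient ψ x)|
            = |c x| * |ψ x| * |fderiv ℝ c x (gradient ψ x)| := by rw [abs_mul, abs_mul]
        calc -(c x * ψ x * fderiv ℝ c x (gradient ψ x))
            ≤ |c x| * |ψ x| * |fderiv ℝ c x (gradient ψ x)| := by rw [← heqa]; exact habs
          _ ≤ 1 * |ψ x| * (C / n * ‖gradient ψ x‖) := le_trans m1 m2
          _ = |ψ x| * (C / n * ‖gradient ψ x‖) := by ring
      have am : 2 * (|ψ x| * ‖gradient ψ x‖) ≤ (ψ x) ^ 2 + ‖gradient ψ x‖ ^ 2 := by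
        nlinarith [sq_nonneg (|ψ x| - ‖gradient ψ x‖), sq_abs (ψ x)]
      have k3 : 2 * (-(c x * ψ x * fderiv ℝ c x (gradient ψ x))) * p x
          ≤ 2 * (|ψ x| * (C / n * ‖gradient ψ x‖)) * p x := by
        apply mul_le_mul_of_nonneg_right _ hps
        linarith
      have k4 : C / n * (2 * (|ψ x| * ‖gradient ψ x‖)) * p x
          ≤ C / n * ((ψ x) ^ 2 + ‖gradient ψ x‖ ^ 2) * p x :=
        mul_le_mul_of_nonneg_right (mul_le_mul_of_nonneg_left am hCn) hps
      have eB : -B x = 2 * (-(c x * ψ x * fderiv ℝ c x (gradient ψ x))) * p x := by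
        simp only [hB]; ring
      rw [eB]
      calc 2 * (-(c x * ψ x * fderiv ℝ c x (gradient ψ x))) * p x
          ≤ 2 * (|ψ x| * (C / n * ‖gradient ψ x‖)) * p x := k3
        _ = C / n * (2 * (|ψ x| * ‖gradient ψ x‖)) * p x := by ring
        _ ≤ C / n * ((ψ x) ^ 2 + ‖gradient ψ x‖ ^ 2) * p x := k4
        _ = C / n * ((ψ x) ^ 2 * p x + ‖gradient ψ x‖ ^ 2 * p x) := by ring
    have hnegBint : Integrable (fun x => -B x) := hBint.neg
    have hBle : -∫ x, B x
        ≤ C / n * ((∫ x, (ψ x) ^ 2 * p x) + ∫ x, ‖gradient ψ x‖ ^ 2 * p x) := by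
      rw [← integral_neg]
      calc ∫ x, -B x ≤ ∫ x, C / n * ((ψ x) ^ 2 * p x + ‖gradient ψ x‖ ^ 2 * p x) :=
            integral_mono hnegBint hRint hptB
        _ = C / n * ((∫ x, (ψ x) ^ 2 * p x) + ∫ x, ‖gradient ψ x‖ ^ 2 * p x) := by
            rw [integral_const_mul, integral_add h1 h2]
    -- conclude
    have hgoal : (fun x => (χ n x) ^ 2 * ‖gradient ψ x‖ ^ 2 * p x) = A := by
      funext x; simp only [hA]; ring
    rw [hgoal, eA]
    linarith
  -- limits
  have hlim1 : Filter.Tendsto (fun n : ℕ => ∫ x, (χ n x) ^ 2 * ‖gradient ψ x‖ ^ 2 * p x)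
      Filter.atTop (nhds (∫ x, ‖gradient ψ x‖ ^ 2 * p x)) := by
    apply tendsto_integral_of_dominated_convergence (fun x => ‖gradient ψ x‖ ^ 2 * p x)
    · intro n
      exact ((((hχsm n).continuous.pow 2).mul (hgradc.norm.pow 2)).mul
        hp.continuous).aestronglyMeasurable
    · exact h2
    · intro n
      filter_upwards with x
      have hps := (hppos x).le
      have e2 : (χ n x) ^ 2 ≤ 1 := by nlinarith [hχ0 n x, hχ1 n x]
      have e0 : (0:ℝ) ≤ (χ n x) ^ 2 * ‖gradient ψ x‖ ^ 2 * p x := by positivity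
      rw [Real.norm_eq_abs, abs_of_nonneg e0]
      nlinarith [mul_le_mul_of_nonneg_right
        (mul_le_mul_of_nonneg_right e2 (sq_nonneg ‖gradient ψ x‖)) hps]
    · filter_upwards with x
      apply Filter.Tendsto.congr' _ tendsto_const_nhds
      filter_upwards [hχone x] with n hn
      rw [hn]; ring
  have hlim2 : Filter.Tendsto (fun n : ℕ =>
      (∫ x, |ψ x| * |G x| * p x)
        + C / n * ((∫ x, (ψ x) ^ 2 * p x) + ∫ x, ‖gradient ψ x‖ ^ 2 * p x))
      Filter.atTop (nhds (∫ x, |ψ x| * |G x| * p x)) := by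
    have h0 : Filter.Tendsto (fun n : ℕ => C / n *
        ((∫ x, (ψ x) ^ 2 * p x) + ∫ x, ‖gradient ψ x‖ ^ 2 * p x)) Filter.atTop (nhds 0) := by
      have := (tendsto_const_div_atTop_nhds_zero_nat C).mul_const
        ((∫ x, (ψ x) ^ 2 * p x) + ∫ x, ‖gradient ψ x‖ ^ 2 * p x)
      simpa using this
    have := Filter.Tendsto.const_add (∫ x, |ψ x| * |G x| * p x) h0
    simpa using this
  refine le_of_tendsto_of_tendsto hlim1 hlim2 ?_
  rw [Filter.EventuallyLE, Filter.eventually_atTop]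
  exact ⟨1, fun n hn => key n hn⟩
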